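/- arXiv:1410.5995 — 2 statements merged into one kernel-verified Lean document; each statement's English description precedes it below -/
import Mathlib

section
/- Let G be a finite connected coherently signed graph. Then the set of negatively signed edges is a cut-set: there exists a subset S ⊆ V such that ∂S is exactly the set of edges e with sgn e = −1. -/
open scoped Classical
open Matrix

noncomputable section

namespace SignedPaper

variable {V : Type*}

/-- The twisted Laplacian `Δ^τ` of a signed graph: `(Δ^τ f)(x) = d(x) f(x) - ∑_{y ∈ N(x)} sgn(x,y) f(y)`. -/
def twistedLaplacian [Fintype V] [DecidableEq V] (G : SimpleGraph V) [DecidableRel G.Adj]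
    (sgn : Sym2 V → ℝ) : Matrix V V ℝ :=
  Matrix.of fun x y =>
    if x = y then (G.degree x : ℝ) else if G.Adj x y then - sgn s(x, y) else 0

/-- The sign function takes values ±1 on every edge. -/
def IsSigning (G : SimpleGraph V) (sgn : Sym2 V → ℝ) : Prop :=
  ∀ e ∈ G.edgeSet, sgn e = 1 ∨ sgn e = -1

/-- A signed graph is coherently signed if every cycle has sign +1. -/
def IsCoherent (G : SimpleGraph V) (sgn : Sym2 V → ℝ) : Prop :=
  ∀ (v : V) (c : G.Walk v v), c.IsCycle → (c.edges.map sgn).prod = 1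

/-- The subgraph induced on a vertex subset `S`, viewed as a graph on `V`. -/
def inducedOn (G : SimpleGraph V) (S : Set V) : SimpleGraph V where
  Adj x y := G.Adj x y ∧ x ∈ S ∧ y ∈ S
  symm := ⟨fun x y h => ⟨h.1.symm, h.2.2, h.2.1⟩⟩
  loopless := ⟨fun x h => G.irrefl h.1⟩

/-- `e_mc(S)`: the minimal number of edges to delete from the induced subgraph on `S`
so that the result is coherently signed. -/
def emc (G : SimpleGraph V) (sgn : Sym2 V → ℝ) (S : Set V) : ℕ :=
  sInf {n : ℕ | ∃ F : Finset (Sym2 V), F.card = n ∧ ↑F ⊆ (inducedOn G S).edgeSet ∧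
    IsCoherent ((inducedOn G S).deleteEdges ↑F) sgn}

/-- `∂S`: the set of edges with exactly one endpoint in `S`. -/
def edgeBoundary [Fintype V] [DecidableEq V] (G : SimpleGraph V) (S : Set V) :
    Finset (Sym2 V) :=
  Finset.univ.filter fun e : Sym2 V => e ∈ G.edgeSet ∧ ∃ x y, e = s(x, y) ∧ x ∈ S ∧ y ∉ S

/-- `ψ(S) = (|∂S| + 2 e_mc(S)) / |S|`. -/
def psiSet [Fintype V] [DecidableEq V] (G : SimpleGraph V) (sgn : Sym2 V → ℝ)
    (S : Finset V) : ℝ :=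
  ((edgeBoundary G ↑S).card + 2 * emc G sgn ↑S) / S.card

/-- `ψ(G) = min_{∅ ≠ S ⊆ V} ψ(S)`. -/
def psi [Fintype V] [DecidableEq V] (G : SimpleGraph V) (sgn : Sym2 V → ℝ) : ℝ :=
  sInf {x : ℝ | ∃ S : Finset V, S.Nonempty ∧ x = psiSet G sgn S}

/-- `ψ̃(G) = min_{∅ ≠ S ⊆ V} (|∂S| + 4 e_mc(S)) / |S|`. -/
def psiTilde [Fintype V] [DecidableEq V] (G : SimpleGraph V) (sgn : Sym2 V → ℝ) : ℝ :=
  sInf {x : ℝ | ∃ S : Finset V, S.Nonempty ∧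
    x = ((edgeBoundary G ↑S).card + 4 * emc G sgn ↑S) / S.card}

/-- `h(S) = min_{∅ ≠ T ⊆ S} |∂T| / |T|`. -/
def hConst [Fintype V] [DecidableEq V] (G : SimpleGraph V) (S : Finset V) : ℝ :=
  sInf {x : ℝ | ∃ T : Finset V, T ⊆ S ∧ T.Nonempty ∧ x = (edgeBoundary G ↑T).card / T.card}

/-- The signed adjacency matrix `A^τ`. -/
def signedAdjMatrix [Fintype V] (G : SimpleGraph V) [DecidableRel G.Adj]
    (sgn : Sym2 V → ℝ) : Matrix V V ℝ :=
  Matrix.of fun x y => if G.Adj x y then sgn s(x, y) else 0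



open SimpleGraph

section Aux

lemma exists_split [DecidableEq V] {G : SimpleGraph V} {w : V} (c : G.Walk w w)
    (hc : 2 ≤ c.support.tail.count w) :
    ∃ c₁ c₂ : G.Walk w w, c₁.length < c.length ∧ c₂.length < c.length ∧
      c.edges = c₁.edges ++ c₂.edges := by
  cases c with
  | nil => simp at hc
  | cons h q =>
    rename_i u
    have hq : 2 ≤ q.support.count w := by simpa using hc
    have hwq : w ∈ q.support := List.count_pos_iff.mp (by omega)
    have hspec : (q.takeUntil w hwq).append (q.dropUntil w hwq) = q := q.take_spec hwq
    have hlen : (q.takeUntil w hwq).length + (q.dropUntil w hwq).length = q.length := by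
      have := congr_arg Walk.length hspec; rwa [Walk.length_append] at this
    have hct : (q.takeUntil w hwq).support.count w = 1 :=
      q.count_support_takeUntil_eq_one hwq
    have hsupp : q.support = (q.takeUntil w hwq).support ++ (q.dropUntil w hwq).support.tail := by
      have := congr_arg Walk.support hspec
      rw [Walk.support_append] at this
      exact this.symm
    have hd1 : 1 ≤ (q.dropUntil w hwq).length := by
      have h2 : 2 ≤ ((q.takeUntil w hwq).support ++ (q.dropUntil w hwq).support.tail).count w := by
        rw [← hsupp]; exact hq
      rw [List.count_append, hct] at h2
      have h4 : (q.dropUntil w hwq).support.tail.count w ≤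
          (q.dropUntil w hwq).support.tail.length := List.count_le_length
      have h5 : (q.dropUntil w hwq).support.tail.length = (q.dropUntil w hwq).length := by
        simp [List.length_tail, Walk.length_support]
      omega
    refine ⟨Walk.cons h (q.takeUntil w hwq), q.dropUntil w hwq, ?_, ?_, ?_⟩
    · simp only [Walk.length_cons]; omega
    · simp only [Walk.length_cons]; omega
    · rw [Walk.edges_cons, Walk.edges_cons, List.cons_append]
      congr 1
      have := congr_arg Walk.edges hspec
      rw [Walk.edges_append] at this
      exact this.symm

lemma closed_walk_prod [DecidableEq V] {G : SimpleGraph V} {sgn : Sym2 V → ℝ}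
    (hsgn : IsSigning G sgn) (hcoh : IsCoherent G sgn) :
    ∀ (n : ℕ) {v : V} (c : G.Walk v v), c.length ≤ n → (c.edges.map sgn).prod = 1 := by
  intro n
  induction n with
  | zero =>
    intro v c hc
    cases c with
    | nil => simp
    | cons h p => simp [Walk.length_cons] at hc
  | succ n ih =>
    intro v c hc
    by_cases hnd : c.support.tail.Nodup
    · cases c with
      | nil => simp
      | cons h p =>
        rename_i u
        have hnd' : p.support.Nodup := by simpa using hnd
        have hp : p.IsPath := (Walk.isPath_def p).mpr hnd'
        by_cases he : s(v, u) ∈ p.edges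
        · cases p with
          | nil => simp at he
          | cons h' p' =>
            rename_i u'
            rw [Walk.edges_cons] at he
            rcases List.mem_cons.mp he with heq | hmem
            · have hvu' : v = u' := by
                rcases Sym2.eq_iff.mp heq with ⟨h1, h2⟩ | ⟨h1, h2⟩
                · exact absurd h1 h.ne
                · exact h1
              subst hvu'
              have hp'nil : p' = Walk.nil := by
                have hps : p'.support.Nodup := (List.nodup_cons.mp (by simpa using hnd')).2
                exact (Walk.isPath_iff_eq_nil (p := p')).mp ((Walk.isPath_def p').mpr hps)
              subst hp'nil
              have hmem : s(v, u) ∈ G.edgeSet := h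
              rcases hsgn _ hmem with hs | hs <;>
                simp [Walk.edges_cons, Sym2.eq_swap (a := u) (b := v), hs]
            · have hu : u ∉ p'.support := (List.nodup_cons.mp (by simpa using hnd')).1
              exact absurd (Walk.snd_mem_support_of_mem_edges p' hmem) hu
        · exact hcoh v (Walk.cons h p) ((Walk.cons_isCycle_iff p h).mpr ⟨hp, he⟩)
    · obtain ⟨w, hwdup⟩ := List.exists_duplicate_iff_not_nodup.mpr hnd
      have hw2 : 2 ≤ c.support.tail.count w := List.duplicate_iff_two_le_count.mp hwdup
      have hwmem : w ∈ c.support := List.mem_of_mem_tail hwdup.mem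
      have hlenr : (c.rotate w hwmem).length = c.length := by
        have h1 := congr_arg Walk.length (c.take_spec hwmem)
        rw [Walk.length_append] at h1
        show ((c.dropUntil w hwmem).append (c.takeUntil w hwmem)).length = c.length
        rw [Walk.length_append]
        omega
      have hcnt : 2 ≤ (c.rotate w hwmem).support.tail.count w := by
        rw [(Walk.support_rotate c w hwmem).perm.count_eq]
        exact hw2
      have hprodeq : ((c.rotate w hwmem).edges.map sgn).prod = (c.edges.map sgn).prod :=
        ((Walk.rotate_edges c w hwmem).perm.map sgn).prod_eq
      obtain ⟨c₁, c₂, h₁, h₂, hE⟩ := exists_split (c.rotate w hwmem) hcnt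
      rw [← hprodeq, hE, List.map_append, List.prod_append,
        ih c₁ (by omega), ih c₂ (by omega), one_mul]

lemma walk_prod_sq {G : SimpleGraph V} {sgn : Sym2 V → ℝ} (hsgn : IsSigning G sgn) :
    ∀ {a b : V} (p : G.Walk a b), (p.edges.map sgn).prod * (p.edges.map sgn).prod = 1 := by
  intro a b p
  induction p with
  | nil => simp
  | cons h q ih =>
    rw [Walk.edges_cons, List.map_cons, List.prod_cons]
    have hmem : s(_, _) ∈ G.edgeSet := h
    rcases hsgn _ hmem with hs | hs <;> rw [hs] <;> linear_combination ih

end Aux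

/-- In a finite connected coherently signed graph, the set of negatively
signed edges is a cut-set: it equals `∂S` for some `S ⊆ V`. -/
theorem isCoherent_negEdges_cutSet [Fintype V] [DecidableEq V] (G : SimpleGraph V)
    (hG : G.Connected) (sgn : Sym2 V → ℝ) (hsgn : IsSigning G sgn)
    (hcoh : IsCoherent G sgn) :
    ∃ S : Finset V, (edgeBoundary G ↑S : Set (Sym2 V)) = {e | e ∈ G.edgeSet ∧ sgn e = -1} := by
  classical
  obtain ⟨v₀⟩ := hG.nonempty
  set f : V → ℝ := fun v => (((hG.preconnected v₀ v).some.edges).map sgn).prod with hf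
  have hf2 : ∀ v, f v * f v = 1 := fun v => walk_prod_sq hsgn _
  have hfpm : ∀ v, f v = 1 ∨ f v = -1 := fun v => mul_self_eq_one_iff.mp (hf2 v)
  have key : ∀ {a b : V} (p : G.Walk a b), (p.edges.map sgn).prod = f a * f b := by
    intro a b p
    have hcl := closed_walk_prod hsgn hcoh
      ((((hG.preconnected v₀ a).some.append p).append
        ((hG.preconnected v₀ b).some.reverse)).length)
      (((hG.preconnected v₀ a).some.append p).append
        ((hG.preconnected v₀ b).some.reverse)) le_rfl
    rw [Walk.edges_append, Walk.edges_append, Walk.edges_reverse, List.map_append,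
      List.map_append, List.map_reverse, List.prod_append, List.prod_append,
      List.prod_reverse] at hcl
    have ha := hf2 a
    have hb := hf2 b
    linear_combination (f a * f b) * hcl -
      ((p.edges.map sgn).prod * f b * f b) * ha - (p.edges.map sgn).prod * hb
  have hedge : ∀ {x y : V}, G.Adj x y → sgn s(x, y) = f x * f y := by
    intro x y hxy
    have := key (Walk.cons hxy Walk.nil)
    simpa using this
  refine ⟨Finset.univ.filter (fun v => f v = 1), ?_⟩
  ext e
  induction e using Sym2.ind with
  | _ x y =>
    simp only [edgeBoundary, Finset.coe_filter, Finset.mem_coe, Finset.mem_univ, true_and,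
      Set.mem_setOf_eq, Finset.mem_filter]
    constructor
    · rintro ⟨he, a, b, hab, ha, hb⟩
      refine ⟨he, ?_⟩
      have hadj : G.Adj a b := by
        rw [hab] at he
        exact he
      have hb' : f b = -1 := (hfpm b).resolve_left hb
      rw [hab, hedge hadj, ha, hb']
      norm_num
    · rintro ⟨he, hneg⟩
      refine ⟨he, ?_⟩
      have hadj : G.Adj x y := he
      rw [hedge hadj] at hneg
      rcases hfpm x with hx | hx
      · refine ⟨x, y, rfl, hx, ?_⟩
        rcases hfpm y with hy | hy
        · rw [hx, hy] at hneg; norm_num at hneg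
        · rw [hy]; norm_num
      · refine ⟨y, x, Sym2.eq_swap, ?_, ?_⟩
        · rcases hfpm y with hy | hy
          · exact hy
          · rw [hx, hy] at hneg; norm_num at hneg
        · rw [hx]; norm_num


end SignedPaper
end
end

section
/- Let G = (V, E) be a finite simple (unsigned) graph with |V| ≥ 4 and maximal degree d_max. Let S ⊊ V with |S| ≤ |V|/2 and let f : V → ℝ satisfy f(x) > 0 for all x ∈ S and f(x) = 0 for all x ∉ S. Then Σ_{{x,y} ∈ E} (f(y) − f(x))² ≥ ( d_max − √(d_max² − h(S)²) ) · Σ_{x ∈ V} f(x)², where h(S) = min over nonempty T ⊆ S of |∂T|/|T|. -/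
open scoped Classical
open Matrix

noncomputable section

namespace SignedPaper

variable {V : Type*}

section AuxLemmas

variable [Fintype V] [DecidableEq V] (G : SimpleGraph V)

lemma mem_edgeBoundary_iff {a b : V} (hab : G.Adj a b) (T : Set V) :
    s(a, b) ∈ edgeBoundary G T ↔ ((a ∈ T ∧ b ∉ T) ∨ (b ∈ T ∧ a ∉ T)) := by
  simp only [edgeBoundary, Finset.mem_filter, Finset.mem_univ, true_and,
    SimpleGraph.mem_edgeSet]
  constructor
  · rintro ⟨-, x, y, hxy, hx, hy⟩
    rw [Sym2.eq_iff] at hxy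
    rcases hxy with ⟨rfl, rfl⟩ | ⟨rfl, rfl⟩
    · exact Or.inl ⟨hx, hy⟩
    · exact Or.inr ⟨hx, hy⟩
  · rintro (⟨ha, hb⟩ | ⟨hb, ha⟩)
    · exact ⟨hab, a, b, rfl, ha, hb⟩
    · exact ⟨hab, b, a, (Sym2.eq_swap), hb, ha⟩

lemma edgeBoundary_subset_edgeFinset [DecidableRel G.Adj] (T : Set V) :
    edgeBoundary G T ⊆ G.edgeFinset := by
  intro e he
  simp only [edgeBoundary, Finset.mem_filter] at he
  exact SimpleGraph.mem_edgeFinset.2 he.2.1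

lemma hConst_bddBelow (S : Finset V) :
    BddBelow {x : ℝ | ∃ T : Finset V, T ⊆ S ∧ T.Nonempty ∧
      x = (edgeBoundary G ↑T).card / T.card} := by
  refine ⟨0, ?_⟩
  rintro x ⟨T, -, -, rfl⟩
  positivity

lemma hConst_le {S T : Finset V} (hTS : T ⊆ S) (hT : T.Nonempty) :
    hConst G S ≤ (edgeBoundary G ↑T).card / T.card :=
  csInf_le (hConst_bddBelow G S) ⟨T, hTS, hT, rfl⟩

lemma hConst_mul_card_le {S T : Finset V} (hTS : T ⊆ S) (hT : T.Nonempty) :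
    hConst G S * T.card ≤ (edgeBoundary G ↑T).card := by
  have h := hConst_le G hTS hT
  have hpos : (0 : ℝ) < T.card := by exact_mod_cast hT.card_pos
  calc hConst G S * T.card ≤ ((edgeBoundary G ↑T).card / T.card) * T.card := by
        exact mul_le_mul_of_nonneg_right h hpos.le
    _ = (edgeBoundary G ↑T).card := by field_simp

lemma hConst_nonneg {S : Finset V} (hS : S.Nonempty) : 0 ≤ hConst G S := by
  refine le_csInf ⟨_, S, subset_rfl, hS, rfl⟩ ?_
  rintro x ⟨T, -, -, rfl⟩
  positivity

lemma hConst_le_maxDegree [DecidableRel G.Adj] {S : Finset V} (hS : S.Nonempty) :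
    hConst G S ≤ (G.maxDegree : ℝ) := by
  obtain ⟨v, hv⟩ := hS
  have h1 : hConst G S ≤ (edgeBoundary G ↑({v} : Finset V)).card / ({v} : Finset V).card :=
    hConst_le G (Finset.singleton_subset_iff.2 hv) (Finset.singleton_nonempty v)
  have h2 : edgeBoundary G ↑({v} : Finset V) ⊆ G.incidenceFinset v := by
    intro e he
    simp only [edgeBoundary, Finset.mem_filter, Finset.mem_univ, true_and] at he
    obtain ⟨he1, x, y, rfl, hx, -⟩ := he
    rw [SimpleGraph.mem_incidenceFinset]
    simp only [Finset.coe_singleton, Set.mem_singleton_iff] at hx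
    exact ⟨he1, by subst hx; exact Sym2.mem_mk_left x y⟩
  have h3 : (edgeBoundary G ↑({v} : Finset V)).card ≤ G.degree v := by
    rw [← SimpleGraph.card_incidenceFinset_eq_degree]
    exact Finset.card_le_card h2
  have h4 : G.degree v ≤ G.maxDegree := G.degree_le_maxDegree v
  simp only [Finset.card_singleton, Nat.cast_one, div_one] at h1
  calc hConst G S ≤ ((edgeBoundary G ↑({v} : Finset V)).card : ℝ) := h1
    _ ≤ (G.maxDegree : ℝ) := by exact_mod_cast h3.trans h4


lemma coarea [DecidableRel G.Adj] (S : Finset V) :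
    ∀ (n : ℕ) (g : V → ℝ), (Finset.univ.filter fun x => g x ≠ 0).card ≤ n →
    (∀ x, 0 ≤ g x) → (∀ x ∉ S, g x = 0) →
    hConst G S * ∑ x, g x ≤
      ∑ e ∈ G.edgeFinset, Sym2.lift ⟨fun x y => |g y - g x|, fun x y => abs_sub_comm _ _⟩ e := by
  intro n
  induction n with
  | zero =>
    intro g hcard hg hsupp
    have hg0 : ∀ x, g x = 0 := by
      intro x
      by_contra h
      have : x ∈ Finset.univ.filter fun x => g x ≠ 0 := by simp [h]
      have := Finset.card_pos.2 ⟨x, this⟩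
      omega
    have h1 : ∑ x, g x = 0 := by simp [hg0]
    rw [h1, mul_zero]
    refine Finset.sum_nonneg fun e _ => ?_
    induction e with
    | _ x y => simp [Sym2.lift_mk]
  | succ n ih =>
    intro g hcard hg hsupp
    set T := Finset.univ.filter fun x => g x ≠ 0 with hTdef
    rcases T.eq_empty_or_nonempty with hTe | hT
    · exact ih g (by rw [← hTdef, hTe]; simp) hg hsupp
    · -- minimum positive value
      set m := T.inf' hT g with hmdef
      have hmle : ∀ x ∈ T, m ≤ g x := fun x hx => Finset.inf'_le g hx
      have hTg : ∀ x, x ∈ T ↔ g x ≠ 0 := by intro x; simp [hTdef]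
      have hTzero : ∀ x ∉ T, g x = 0 := by
        intro x hx
        by_contra h
        exact hx ((hTg x).2 h)
      have hm0 : 0 < m := by
        obtain ⟨x0, hx0, hx0e⟩ := Finset.exists_mem_eq_inf' hT g
        rw [hmdef, hx0e]
        exact lt_of_le_of_ne (hg x0) (Ne.symm ((hTg x0).1 hx0))
      obtain ⟨x0, hx0, hx0e⟩ := Finset.exists_mem_eq_inf' hT g
      set g' : V → ℝ := fun x => if x ∈ T then g x - m else 0 with hg'def
      have hg'0 : ∀ x, 0 ≤ g' x := by
        intro x
        by_cases hx : x ∈ T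
        · simp only [hg'def, if_pos hx]; linarith [hmle x hx]
        · simp [hg'def, hx]
      have hg'supp : ∀ x ∉ S, g' x = 0 := by
        intro x hx
        have : x ∉ T := fun hxT => (hTg x).1 hxT (hsupp x hx)
        simp [hg'def, this]
      have hTS : T ⊆ S := by
        intro x hx
        by_contra h
        exact (hTg x).1 hx (hsupp x h)
      have hg'card : (Finset.univ.filter fun x => g' x ≠ 0).card ≤ n := by
        have hsub : (Finset.univ.filter fun x => g' x ≠ 0) ⊆ T.erase x0 := by
          intro x hx
          simp only [Finset.mem_filter, Finset.mem_univ, true_and] at hx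
          have hxT : x ∈ T := by
            by_contra h
            exact hx (by simp [hg'def, h])
          refine Finset.mem_erase.2 ⟨?_, hxT⟩
          rintro rfl
          exact hx (by simp [hg'def, hxT, ← hx0e, hmdef])
        have := Finset.card_le_card hsub
        rw [Finset.card_erase_of_mem hx0] at this
        omega
      -- per-edge identity
      have key : ∀ x y, G.Adj x y → |g y - g x| =
          |g' y - g' x| + (if s(x, y) ∈ edgeBoundary G (↑T : Set V) then m else 0) := by
        intro x y hxy
        have hiff : s(x, y) ∈ edgeBoundary G (↑T : Set V) ↔
            ((x ∈ T ∧ y ∉ T) ∨ (y ∈ T ∧ x ∉ T)) := by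
          rw [mem_edgeBoundary_iff G hxy]; simp [Finset.mem_coe]
        simp only [hiff]
        by_cases hx : x ∈ T <;> by_cases hy : y ∈ T
        · rw [if_neg (by push_cast; tauto)]
          simp only [hg'def, if_pos hx, if_pos hy]
          rw [add_zero]
          congr 1
          ring
        · rw [if_pos (by push_cast; tauto)]
          have hgy : g y = 0 := hTzero y hy
          simp only [hg'def, if_pos hx, if_neg hy, hgy]
          rw [zero_sub, zero_sub, abs_neg, abs_neg, abs_of_nonneg (hg x),
            abs_of_nonneg (by linarith [hmle x hx])]
          ring
        · rw [if_pos (by push_cast; tauto)]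
          have hgx : g x = 0 := hTzero x hx
          simp only [hg'def, if_pos hy, if_neg hx, hgx]
          rw [sub_zero, sub_zero, abs_of_nonneg (hg y),
            abs_of_nonneg (by linarith [hmle y hy])]
          ring
        · rw [if_neg (by push_cast; tauto)]
          simp [hg'def, hx, hy, hTzero x hx, hTzero y hy]
      -- sum identity over edges
      have hsum : ∑ e ∈ G.edgeFinset,
            Sym2.lift ⟨fun x y => |g y - g x|, fun x y => abs_sub_comm _ _⟩ e =
          (∑ e ∈ G.edgeFinset,
            Sym2.lift ⟨fun x y => |g' y - g' x|, fun x y => abs_sub_comm _ _⟩ e)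
          + m * (edgeBoundary G (↑T : Set V)).card := by
        have step : ∀ e ∈ G.edgeFinset,
            Sym2.lift ⟨fun x y => |g y - g x|, fun x y => abs_sub_comm _ _⟩ e =
            Sym2.lift ⟨fun x y => |g' y - g' x|, fun x y => abs_sub_comm _ _⟩ e
              + (if e ∈ edgeBoundary G (↑T : Set V) then m else 0) := by
          intro e he
          rw [SimpleGraph.mem_edgeFinset] at he
          induction e with
          | _ x y =>
            simp only [Sym2.lift_mk]
            exact key x y he
        rw [Finset.sum_congr rfl step, Finset.sum_add_distrib]
        congr 1
        have hAB : G.edgeFinset ∩ edgeBoundary G (↑T : Set V) = edgeBoundary G (↑T : Set V) := by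
          ext e
          simp only [Finset.mem_inter]
          exact ⟨fun h => h.2, fun h => ⟨edgeBoundary_subset_edgeFinset G _ h, h⟩⟩
        rw [Finset.sum_ite_mem, hAB, Finset.sum_const, nsmul_eq_mul, mul_comm]
      -- vertex sum identity
      have hvsum : ∑ x, g x = (∑ x, g' x) + m * T.card := by
        have step : ∀ x : V, g x = g' x + (if x ∈ T then m else 0) := by
          intro x
          by_cases hx : x ∈ T
          · simp [hg'def, hx]
          · simp [hg'def, hx, hTzero x hx]
        rw [Finset.sum_congr rfl (fun x _ => step x), Finset.sum_add_distrib]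
        congr 1
        rw [Finset.sum_ite_mem, Finset.univ_inter, Finset.sum_const, nsmul_eq_mul, mul_comm]
      have hbound : hConst G S * (m * T.card) ≤ m * (edgeBoundary G (↑T : Set V)).card := by
        have := hConst_mul_card_le G hTS hT
        calc hConst G S * (m * T.card) = m * (hConst G S * T.card) := by ring
          _ ≤ m * (edgeBoundary G (↑T : Set V)).card := by
              exact mul_le_mul_of_nonneg_left this hm0.le
      have hrec := ih g' hg'card hg'0 hg'supp
      rw [hvsum, hsum, mul_add]
      linarith

lemma sum_edgeFinset_eq [DecidableRel G.Adj] (g : V → ℝ) (F : Sym2 V → ℝ)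
    (hF : ∀ x y, G.Adj x y → F s(x, y) = g x + g y) :
    ∑ e ∈ G.edgeFinset, F e = ∑ v, (G.degree v : ℝ) * g v := by
  have h1 : ∑ d : G.Dart, g d.fst = ∑ v, (G.degree v : ℝ) * g v := by
    rw [← Finset.sum_fiberwise_of_maps_to (fun (d : G.Dart) _ => Finset.mem_univ d.fst)
      (fun d => g d.fst)]
    refine Finset.sum_congr rfl fun v _ => ?_
    have : ∀ d ∈ Finset.univ.filter fun d : G.Dart => d.fst = v, g d.fst = g v := by
      intro d hd; rw [(Finset.mem_filter.1 hd).2]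
    rw [Finset.sum_congr rfl this, Finset.sum_const, nsmul_eq_mul]
    congr 1
    exact_mod_cast G.dart_fst_fiber_card_eq_degree v
  have h2 : ∑ d : G.Dart, g d.fst = ∑ e ∈ G.edgeFinset, F e := by
    rw [← Finset.sum_fiberwise_of_maps_to
      (fun (d : G.Dart) _ => SimpleGraph.mem_edgeFinset.2 d.edge_mem) (fun d => g d.fst)]
    refine Finset.sum_congr rfl fun e he => ?_
    rw [SimpleGraph.mem_edgeFinset] at he
    induction e with
    | _ x y =>
      have hxy : G.Adj x y := he
      let d0 : G.Dart := ⟨(x, y), hxy⟩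
      have hfib : (Finset.univ.filter fun d : G.Dart => d.edge = s(x, y)) = {d0, d0.symm} := by
        have := d0.edge_fiber
        convert this using 2
        exact Iff.rfl
      rw [hfib, Finset.sum_pair d0.symm_ne.symm, hF x y hxy]
      rfl
  rw [← h2, h1]

end AuxLemmas

/-- (Lemma on `h(S)`, unsigned graphs.) If `|V| ≥ 4`, `S ⊊ V`,
`|S| ≤ |V|/2`, and `f > 0` on `S` and `f = 0` off `S`, then
`∑_{{x,y} ∈ E} (f(y) - f(x))² ≥ (d_max - √(d_max² - h(S)²)) ∑_x f(x)²`. -/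

theorem sum_gradient_sq_ge [Fintype V] [DecidableEq V] (G : SimpleGraph V)
    [DecidableRel G.Adj] (hV : 4 ≤ Fintype.card V) (S : Finset V) (hS : S ≠ Finset.univ)
    (hScard : 2 * S.card ≤ Fintype.card V) (f : V → ℝ)
    (hpos : ∀ x ∈ S, 0 < f x) (hzero : ∀ x ∉ S, f x = 0) :
    ∑ e ∈ G.edgeFinset, Sym2.lift ⟨fun x y => (f y - f x) ^ 2, fun x y => by ring⟩ e
      ≥ ((G.maxDegree : ℝ) - Real.sqrt ((G.maxDegree : ℝ) ^ 2 - hConst G S ^ 2))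
          * ∑ x, f x ^ 2 := by
  set D : ℝ := (G.maxDegree : ℝ) with hD
  set h : ℝ := hConst G S with hh
  set N : ℝ := ∑ x, f x ^ 2 with hN
  set En : ℝ := ∑ e ∈ G.edgeFinset,
    Sym2.lift ⟨fun x y => (f y - f x) ^ 2, fun x y => by ring⟩ e with hEn
  have hEn0 : 0 ≤ En := by
    rw [hEn]
    refine Finset.sum_nonneg fun e _ => ?_
    induction e with
    | _ x y => simp only [Sym2.lift_mk]; positivity
  have hN0 : 0 ≤ N := Finset.sum_nonneg fun x _ => sq_nonneg _
  rcases eq_or_lt_of_le hN0 with hN0e | hNpos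
  · rw [← hN0e, mul_zero]
    exact hEn0
  · -- S is nonempty
    have hSne : S.Nonempty := by
      have : ∃ x, f x ≠ 0 := by
        by_contra hc
        push_neg at hc
        have : N = 0 := by rw [hN]; exact Finset.sum_eq_zero fun x _ => by rw [hc x]; ring
        linarith
      obtain ⟨x, hx⟩ := this
      refine ⟨x, ?_⟩
      by_contra hxS
      exact hx (hzero x hxS)
    have hh0 : 0 ≤ h := hConst_nonneg G hSne
    have hhD : h ≤ D := hConst_le_maxDegree G hSne
    have hD2 : h ^ 2 ≤ D ^ 2 := by nlinarith
    -- co-area bound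
    have hA := coarea G S (Finset.univ.filter fun x => (f x ^ 2 : ℝ) ≠ 0).card
      (fun x => f x ^ 2) le_rfl (fun x => sq_nonneg _)
      (fun x hx => by show f x ^ 2 = 0; rw [hzero x hx]; ring)
    set A : ℝ := ∑ e ∈ G.edgeFinset,
      Sym2.lift ⟨fun x y => |f y ^ 2 - f x ^ 2|, fun x y => abs_sub_comm _ _⟩ e with hAdef
    have hA' : h * N ≤ A := hA
    -- Cauchy-Schwarz
    set P : ℝ := ∑ e ∈ G.edgeFinset,
      Sym2.lift ⟨fun x y => (f y + f x) ^ 2, fun x y => by ring⟩ e with hPdef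
    have hCS : A ^ 2 ≤ En * P := by
      have h1 : A = ∑ e ∈ G.edgeFinset,
          (Sym2.lift ⟨fun x y => |f y - f x|, fun x y => abs_sub_comm _ _⟩ e) *
          (Sym2.lift ⟨fun x y => |f y + f x|, fun x y => by dsimp only; rw [add_comm]⟩ e) := by
        rw [hAdef]
        refine Finset.sum_congr rfl fun e _ => ?_
        induction e with
        | _ x y =>
          simp only [Sym2.lift_mk]
          rw [← abs_mul]
          congr 1
          ring
      have h2 : En = ∑ e ∈ G.edgeFinset,
          (Sym2.lift ⟨fun x y => |f y - f x|, fun x y => abs_sub_comm _ _⟩ e) ^ 2 := by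
        rw [hEn]
        refine Finset.sum_congr rfl fun e _ => ?_
        induction e with
        | _ x y => simp only [Sym2.lift_mk, sq_abs]
      have h3 : P = ∑ e ∈ G.edgeFinset,
          (Sym2.lift ⟨fun x y => |f y + f x|, fun x y => by dsimp only; rw [add_comm]⟩ e) ^ 2 := by
        rw [hPdef]
        refine Finset.sum_congr rfl fun e _ => ?_
        induction e with
        | _ x y => simp only [Sym2.lift_mk, sq_abs]
      rw [h1, h2, h3]
      exact Finset.sum_mul_sq_le_sq_mul_sq _ _ _
    -- P + En = 2 * sum of degrees
    have hPE : P + En = ∑ v, (G.degree v : ℝ) * (2 * f v ^ 2) := by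
      have := sum_edgeFinset_eq G (fun v => 2 * f v ^ 2)
        (fun e => Sym2.lift ⟨fun x y => (f y + f x) ^ 2, fun x y => by ring⟩ e +
                  Sym2.lift ⟨fun x y => (f y - f x) ^ 2, fun x y => by ring⟩ e)
        (fun x y _ => by simp only [Sym2.lift_mk]; ring)
      rw [hPdef, hEn, ← Finset.sum_add_distrib]
      exact this
    have hdeg : ∑ v, (G.degree v : ℝ) * (2 * f v ^ 2) ≤ 2 * D * N := by
      have hstep : ∀ v : V, (G.degree v : ℝ) * (2 * f v ^ 2) ≤ D * (2 * f v ^ 2) := by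
        intro v
        have h1 : (G.degree v : ℝ) ≤ D := by
          rw [hD]; exact_mod_cast G.degree_le_maxDegree v
        have h2 : (0 : ℝ) ≤ 2 * f v ^ 2 := by positivity
        exact mul_le_mul_of_nonneg_right h1 h2
      calc ∑ v, (G.degree v : ℝ) * (2 * f v ^ 2) ≤ ∑ v, D * (2 * f v ^ 2) :=
            Finset.sum_le_sum fun v _ => hstep v
        _ = 2 * D * N := by
            rw [hN, Finset.mul_sum]
            exact Finset.sum_congr rfl fun v _ => by ring
    have hP : P ≤ 2 * D * N - En := by linarith
    -- combine
    have hkey : h ^ 2 * N ^ 2 ≤ En * (2 * D * N - En) := by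
      have h1 : (h * N) ^ 2 ≤ A ^ 2 := by
        have := mul_nonneg hh0 hN0
        nlinarith
      have h2 : En * P ≤ En * (2 * D * N - En) := mul_le_mul_of_nonneg_left hP hEn0
      nlinarith
    have hsq : (En - D * N) ^ 2 ≤ (D ^ 2 - h ^ 2) * N ^ 2 := by nlinarith
    have hfin : D * N - En ≤ Real.sqrt (D ^ 2 - h ^ 2) * N := by
      have h1 : D * N - En ≤ |En - D * N| := by
        rw [abs_sub_comm]
        exact le_abs_self _
      have h2 : |En - D * N| = Real.sqrt ((En - D * N) ^ 2) :=
        (Real.sqrt_sq_eq_abs _).symm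
      have h3 : Real.sqrt ((En - D * N) ^ 2) ≤ Real.sqrt ((D ^ 2 - h ^ 2) * N ^ 2) :=
        Real.sqrt_le_sqrt hsq
      have h4 : Real.sqrt ((D ^ 2 - h ^ 2) * N ^ 2) = Real.sqrt (D ^ 2 - h ^ 2) * N := by
        rw [Real.sqrt_mul (by linarith), Real.sqrt_sq hN0]
      linarith
    have : (D - Real.sqrt (D ^ 2 - h ^ 2)) * N = D * N - Real.sqrt (D ^ 2 - h ^ 2) * N := by
      ring
    rw [ge_iff_le, this]
    linarith


end SignedPaper
end
end
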